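/- The dual of the code d(E_n) ⊆ F_2^{2n} equals the span of d(F_2^n) and the vector e(1^n) = (0,1,0,1,...,0,1); moreover, if n > 2 the set of weight-2 codewords of d(E_n)^⊥ is exactly {d(x) : x ∈ F_2^n of weight 1}. -/

import Mathlib

/-- Hamming weight of a binary word. -/
def wt {n : ℕ} (v : Fin n → ZMod 2) : ℕ :=
  (Finset.univ.filter (fun i => v i ≠ 0)).card

/-- Size of the intersection of the supports of two binary words. -/
def interCard {n : ℕ} (v w : Fin n → ZMod 2) : ℕ :=
  (Finset.univ.filter (fun i => v i ≠ 0 ∧ w i ≠ 0)).card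

/-- The doubling map `d : F₂ⁿ → F₂^{2n}`, `(c₁,…,cₙ) ↦ (c₁,c₁,c₂,c₂,…,cₙ,cₙ)`. -/
def dbl {n : ℕ} (c : Fin n → ZMod 2) : Fin (2 * n) → ZMod 2 :=
  fun i => c ⟨(i : ℕ) / 2, by have := i.isLt; omega⟩

/-- The map `e : F₂ⁿ → F₂^{2n}`, `(c₁,…,cₙ) ↦ (0,c₁,0,c₂,…,0,cₙ)`. -/
def emap {n : ℕ} (c : Fin n → ZMod 2) : Fin (2 * n) → ZMod 2 :=
  fun i => if (i : ℕ) % 2 = 1 then c ⟨(i : ℕ) / 2, by have := i.isLt; omega⟩ else 0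

/-- The even-weight code `𝓔ₙ ⊆ F₂ⁿ`. -/
def evenCode (n : ℕ) : Set (Fin n → ZMod 2) := {c | Even (wt c)}

lemma zmod2_cases (a : ZMod 2) : a = 0 ∨ a = 1 := by fin_cases a; exacts [Or.inl rfl, Or.inr rfl]

def pairEquiv (n : ℕ) : Fin n × Fin 2 ≃ Fin (2 * n) where
  toFun p := ⟨2 * p.1 + p.2, by have := p.1.isLt; have := p.2.isLt; omega⟩
  invFun i := (⟨(i : ℕ) / 2, by have := i.isLt; omega⟩, ⟨(i : ℕ) % 2, by omega⟩)
  left_inv p := by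
    ext
    · simp; omega
    · simp; omega
  right_inv i := by
    apply Fin.ext
    simp
    omega

lemma pair_sum {M : Type*} [AddCommMonoid M] {n : ℕ} (f : Fin (2 * n) → M) :
    ∑ i, f i = ∑ j : Fin n,
      (f ⟨2 * j, by have := j.isLt; omega⟩ + f ⟨2 * j + 1, by have := j.isLt; omega⟩) := by
  rw [← Equiv.sum_comp (pairEquiv n) f, Fintype.sum_prod_type]
  apply Finset.sum_congr rfl
  intro j _
  rw [Fin.sum_univ_two]
  rfl

lemma dbl_even {n : ℕ} (c : Fin n → ZMod 2) (j : Fin n) (h : 2 * (j : ℕ) < 2 * n) :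
    dbl c ⟨2 * j, h⟩ = c j := by
  unfold dbl
  congr 1
  apply Fin.ext
  simp

lemma dbl_odd {n : ℕ} (c : Fin n → ZMod 2) (j : Fin n) (h : 2 * (j : ℕ) + 1 < 2 * n) :
    dbl c ⟨2 * j + 1, h⟩ = c j := by
  unfold dbl
  congr 1
  apply Fin.ext
  show (2 * (j : ℕ) + 1) / 2 = j
  omega

lemma emap_even {n : ℕ} (c : Fin n → ZMod 2) (j : Fin n) (h : 2 * (j : ℕ) < 2 * n) :
    emap c ⟨2 * j, h⟩ = 0 := by
  unfold emap
  rw [if_neg]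
  show ¬ (2 * (j : ℕ)) % 2 = 1
  omega

lemma emap_odd {n : ℕ} (c : Fin n → ZMod 2) (j : Fin n) (h : 2 * (j : ℕ) + 1 < 2 * n) :
    emap c ⟨2 * j + 1, h⟩ = c j := by
  unfold emap
  rw [if_pos (show ((⟨2 * (j : ℕ) + 1, h⟩ : Fin (2 * n)) : ℕ) % 2 = 1 by
    show (2 * (j : ℕ) + 1) % 2 = 1; omega)]
  congr 1
  apply Fin.ext
  show (2 * (j : ℕ) + 1) / 2 = j
  omega

/-- The "pair-sum" vector of `x`. -/
def yy {n : ℕ} (x : Fin (2 * n) → ZMod 2) (j : Fin n) : ZMod 2 :=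
  x ⟨2 * j, by have := j.isLt; omega⟩ + x ⟨2 * j + 1, by have := j.isLt; omega⟩

lemma sum_eq_wt {n : ℕ} (w : Fin n → ZMod 2) : ∑ j, w j = (wt w : ZMod 2) := by
  unfold wt
  rw [Finset.card_filter]
  push_cast
  apply Finset.sum_congr rfl
  intro j _
  rcases zmod2_cases (w j) with h | h <;> simp [h]

lemma even_sum_zero {n : ℕ} {w : Fin n → ZMod 2} (hw : Even (wt w)) :
    ∑ j, w j = 0 := by
  rw [sum_eq_wt]
  obtain ⟨k, hk⟩ := hw
  rw [hk]
  push_cast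
  ring_nf
  simp [show ((2:ZMod 2) = 0) from rfl]

lemma inner_dbl {n : ℕ} (x : Fin (2 * n) → ZMod 2) (w : Fin n → ZMod 2) :
    ∑ i, x i * dbl w i = ∑ j, yy x j * w j := by
  rw [pair_sum (fun i => x i * dbl w i)]
  apply Finset.sum_congr rfl
  intro j _
  beta_reduce
  rw [dbl_even, dbl_odd]
  unfold yy
  ring

lemma add_self' (a : ZMod 2) : a + a = 0 := by
  rcases zmod2_cases a with h | h <;> simp [h] <;> rfl

lemma zmod2_add_eq_zero (a b : ZMod 2) : a + b = 0 ↔ a = b := by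
  rcases zmod2_cases a with h | h <;> rcases zmod2_cases b with h' | h' <;>
    simp [h, h'] <;> decide

lemma mem_dual_iff {n : ℕ} (x : Fin (2 * n) → ZMod 2) :
    (∀ w ∈ dbl '' evenCode n, ∑ i, x i * w i = 0) ↔
      ∀ j k : Fin n, yy x j = yy x k := by
  constructor
  · intro h j k
    by_cases hjk : j = k
    · rw [hjk]
    · set w : Fin n → ZMod 2 := fun i => if i = j ∨ i = k then 1 else 0 with hw
      have hwt : wt w = 2 := by
        unfold wt
        have : (Finset.univ.filter fun i => w i ≠ 0) = {j, k} := by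
          ext i
          by_cases hi : i = j ∨ i = k <;> simp [hw, hi] <;> tauto
        rw [this, Finset.card_pair hjk]
      have hmem : dbl w ∈ dbl '' evenCode n := ⟨w, by simp [evenCode, hwt], rfl⟩
      have := h (dbl w) hmem
      rw [inner_dbl] at this
      have hsum : ∑ i, yy x i * w i = yy x j + yy x k := by
        have : ∀ i, yy x i * w i = if i = j ∨ i = k then yy x i else 0 := by
          intro i
          by_cases hi : i = j ∨ i = k <;> simp [hw, hi]
        rw [Finset.sum_congr rfl (fun i _ => this i)]
        rw [← Finset.sum_filter]
        have hfil : (Finset.univ.filter fun i => i = j ∨ i = k) = {j, k} := by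
          ext i; simp
        rw [hfil, Finset.sum_pair hjk]
      rw [hsum] at this
      exact (zmod2_add_eq_zero _ _).mp this
  · intro h w hw
    obtain ⟨c, hc, rfl⟩ := hw
    rw [inner_dbl]
    rcases Nat.eq_zero_or_pos n with hn | hn
    · subst hn; simp
    · have hconst : ∀ j, yy x j = yy x ⟨0, hn⟩ := fun j => h j ⟨0, hn⟩
      calc ∑ j, yy x j * c j = ∑ j, yy x ⟨0, hn⟩ * c j := by
              apply Finset.sum_congr rfl; intro j _; rw [hconst j]
        _ = yy x ⟨0, hn⟩ * ∑ j, c j := by rw [Finset.mul_sum]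
        _ = 0 := by rw [even_sum_zero hc, mul_zero]

lemma decomp {n : ℕ} (hn : 0 < n) (x : Fin (2 * n) → ZMod 2)
    (h : ∀ j k : Fin n, yy x j = yy x k) :
    x = dbl (fun j => x ⟨2 * j, by have := j.isLt; omega⟩)
        + (yy x ⟨0, hn⟩) • emap (fun _ : Fin n => 1) := by
  funext i
  have hi := i.isLt
  obtain ⟨j, hk⟩ : ∃ j : Fin n, (i : ℕ) = 2 * (j : ℕ) ∨ (i : ℕ) = 2 * (j : ℕ) + 1 := by
    refine ⟨⟨(i : ℕ) / 2, by omega⟩, ?_⟩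
    show (i : ℕ) = 2 * ((i : ℕ) / 2) ∨ (i : ℕ) = 2 * ((i : ℕ) / 2) + 1
    omega
  have hjl := j.isLt
  rcases hk with hk | hk
  · have hieq : i = ⟨2 * (j : ℕ), by omega⟩ := Fin.ext hk
    rw [hieq]
    simp only [Pi.add_apply, Pi.smul_apply, smul_eq_mul]
    rw [dbl_even, emap_even, mul_zero, add_zero]
  · have hieq : i = ⟨2 * (j : ℕ) + 1, by omega⟩ := Fin.ext hk
    rw [hieq]
    simp only [Pi.add_apply, Pi.smul_apply, smul_eq_mul]
    rw [dbl_odd, emap_odd, mul_one]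
    have hy : yy x ⟨0, hn⟩ = yy x j := h _ _
    rw [hy]
    unfold yy
    rcases zmod2_cases (x ⟨2 * (j : ℕ), by omega⟩) with h0 | h0 <;>
      rcases zmod2_cases (x ⟨2 * (j : ℕ) + 1, by omega⟩) with h1 | h1 <;>
      rw [h0, h1] <;> decide

lemma wt_dbl {n : ℕ} (c : Fin n → ZMod 2) : wt (dbl c) = 2 * wt c := by
  unfold wt
  rw [Finset.card_filter, Finset.card_filter,
    pair_sum (fun i => if dbl c i ≠ 0 then 1 else 0), Finset.mul_sum]
  apply Finset.sum_congr rfl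
  intro j _
  beta_reduce
  rw [dbl_even, dbl_odd]
  by_cases h : c j ≠ 0 <;> simp [h]

lemma dbl_mem_dual {n : ℕ} (c : Fin n → ZMod 2) :
    ∀ w ∈ dbl '' evenCode n, ∑ i, dbl c i * w i = 0 := by
  rintro w ⟨u, hu, rfl⟩
  rw [inner_dbl]
  apply Finset.sum_eq_zero
  intro j _
  unfold yy
  rw [dbl_even, dbl_odd, add_self', zero_mul]

lemma emap_one_mem_dual {n : ℕ} :
    ∀ w ∈ dbl '' evenCode n, ∑ i, emap (fun _ : Fin n => 1) i * w i = 0 := by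
  rintro w ⟨u, hu, rfl⟩
  rw [inner_dbl]
  have : ∀ j : Fin n, yy (emap (fun _ : Fin n => 1)) j = 1 := by
    intro j
    unfold yy
    rw [emap_even, emap_odd, zero_add]
  calc ∑ j, yy (emap (fun _ : Fin n => 1)) j * u j = ∑ j, u j := by
        apply Finset.sum_congr rfl; intro j _; rw [this j, one_mul]
    _ = 0 := even_sum_zero hu

def dualSub (n : ℕ) : Submodule (ZMod 2) (Fin (2 * n) → ZMod 2) where
  carrier := {x | ∀ w ∈ dbl '' evenCode n, ∑ i, x i * w i = 0}
  add_mem' := by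
    intro a b ha hb w hw
    simp only [Pi.add_apply, add_mul]
    rw [Finset.sum_add_distrib, ha w hw, hb w hw, add_zero]
  zero_mem' := by intro w hw; simp
  smul_mem' := by
    intro t a ha w hw
    simp only [Pi.smul_apply, smul_eq_mul, mul_assoc]
    rw [← Finset.mul_sum, ha w hw, mul_zero]

lemma wt_dbl_add_emap {n : ℕ} (c : Fin n → ZMod 2) :
    wt (dbl c + emap (fun _ : Fin n => 1)) = n := by
  unfold wt
  rw [Finset.card_filter,
    pair_sum (fun i => if (dbl c + emap (fun _ : Fin n => 1)) i ≠ 0 then 1 else 0)]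
  have h1 : ∀ j ∈ Finset.univ (α := Fin n),
      ((fun i => if (dbl c + emap (fun _ : Fin n => 1)) i ≠ 0 then 1 else 0)
          (⟨2 * j, by have := j.isLt; omega⟩ : Fin (2 * n)) +
        (fun i => if (dbl c + emap (fun _ : Fin n => 1)) i ≠ 0 then 1 else 0)
          (⟨2 * j + 1, by have := j.isLt; omega⟩ : Fin (2 * n))) = 1 := by
    intro j _
    beta_reduce
    simp only [Pi.add_apply]
    have e1 := dbl_even c j (by have := j.isLt; omega)
    have e2 := emap_even (fun _ : Fin n => 1) j (by have := j.isLt; omega)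
    have e3 := dbl_odd c j (by have := j.isLt; omega)
    have e4 := emap_odd (fun _ : Fin n => 1) j (by have := j.isLt; omega)
    simp only [e1, e2, e3, e4, add_zero]
    rcases zmod2_cases (c j) with h | h <;> rw [h] <;> decide
  rw [Finset.sum_congr rfl h1, Finset.sum_const, Finset.card_univ, Fintype.card_fin,
    smul_eq_mul, mul_one]

/-- the dual of `d(𝓔ₙ)` is the span of `d(F₂ⁿ)` together with
`e(1ⁿ) = (0,1,0,1,…,0,1)`; moreover, for `n > 2` its weight-2 codewords are exactly
the `d(x)` for `x` of weight 1. -/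
theorem dual_dblEven_description (n : ℕ) :
    let dualW : Set (Fin (2 * n) → ZMod 2) :=
      {x | ∀ w ∈ dbl '' evenCode n, ∑ i, x i * w i = 0}
    dualW = ↑(Submodule.span (ZMod 2)
        (Set.range (dbl (n := n)) ∪ {emap (fun _ : Fin n => 1)})) ∧
    (2 < n →
      {x ∈ dualW | wt x = 2} =
        {v : Fin (2 * n) → ZMod 2 | ∃ c : Fin n → ZMod 2, wt c = 1 ∧ v = dbl c}) := by
  intro dualW
  have hle : Submodule.span (ZMod 2)
      (Set.range (dbl (n := n)) ∪ {emap (fun _ : Fin n => 1)}) ≤ dualSub n := by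
    rw [Submodule.span_le]
    rintro v (⟨c, rfl⟩ | rfl)
    · exact dbl_mem_dual c
    · exact emap_one_mem_dual
  constructor
  · ext x
    simp only [dualW, Set.mem_setOf_eq, SetLike.mem_coe]
    constructor
    · intro hx
      rcases Nat.eq_zero_or_pos n with hn | hn
      · subst hn
        have hx0 : x = 0 := funext fun i => absurd i.isLt (by omega)
        rw [hx0]
        exact Submodule.zero_mem _
      · have hc := (mem_dual_iff x).mp hx
        rw [decomp hn x hc]
        refine Submodule.add_mem _ ?_ ?_
        · exact Submodule.subset_span (Or.inl ⟨_, rfl⟩)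
        · exact Submodule.smul_mem _ _ (Submodule.subset_span (Or.inr rfl))
    · intro hx
      exact hle hx
  · intro hn2
    have hn : 0 < n := by omega
    ext v
    simp only [dualW, Set.mem_setOf_eq, Set.mem_sep_iff]
    constructor
    · rintro ⟨hv, hwt⟩
      have hc := (mem_dual_iff v).mp hv
      have hveq := decomp hn v hc
      rcases zmod2_cases (yy v ⟨0, hn⟩) with ht | ht
      · rw [ht, zero_smul, add_zero] at hveq
        refine ⟨_, ?_, hveq⟩
        have := wt_dbl (fun j : Fin n => v ⟨2 * j, by have := j.isLt; omega⟩)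
        rw [← hveq, hwt] at this
        omega
      · exfalso
        rw [ht, one_smul] at hveq
        have := wt_dbl_add_emap (fun j : Fin n => v ⟨2 * j, by have := j.isLt; omega⟩)
        rw [← hveq, hwt] at this
        omega
    · rintro ⟨c, hwc, rfl⟩
      exact ⟨dbl_mem_dual c, by rw [wt_dbl, hwc]⟩
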